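/- For every integer m ≥ 0, N_m = ((1+√2)/2)·(2+√2)^m + ((1−√2)/2)·(2−√2)^m, as an identity of real numbers. -/
import Mathlib


/-- `Lessdot l₁ l₂ s` means `l₁ + l₂ ⋖ s`: for every bit position `i`,
the binary digits satisfy `(l₁)ᵢ + (l₂)ᵢ ≤ (s)ᵢ`. -/
def Lessdot (l₁ l₂ s : ℕ) : Prop :=
  ∀ i : ℕ, (l₁.testBit i).toNat + (l₂.testBit i).toNat ≤ (s.testBit i).toNat

open scoped Classical in
/-- `BSet r s = B_s^{(r)} = {2^r·l₁ + l₂ : l₁ + l₂ ⋖ s}`.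
(Note `l₁ + l₂ ⋖ s` forces `l₁, l₂ ≤ s`, so the ranges capture the whole set.) -/
noncomputable def BSet (r s : ℕ) : Finset ℕ :=
  ((Finset.range (s + 1) ×ˢ Finset.range (s + 1)).filter
    (fun p => Lessdot p.1 p.2 s)).image (fun p => 2 ^ r * p.1 + p.2)

/-- `Nnum r m = N_m^{(r)} = Σ_{s=0}^{2^m−1} |B_s^{(r)}|`. -/
noncomputable def Nnum (r m : ℕ) : ℕ := ∑ s ∈ Finset.range (2 ^ m), (BSet r s).card

namespace Stmt8Aux

lemma toNat_testBit' (n i : ℕ) : (n.testBit i).toNat = n / 2 ^ i % 2 := by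
  rw [Nat.testBit_eq_decide_div_mod_eq]
  rcases Nat.mod_two_eq_zero_or_one (n / 2 ^ i) with h | h <;> simp [h]

lemma lessdot_iff' {a b s : ℕ} :
    Lessdot a b s ↔ ∀ i, a / 2 ^ i % 2 + b / 2 ^ i % 2 ≤ s / 2 ^ i % 2 := by
  unfold Lessdot
  simp only [toNat_testBit']

lemma div_div_pow (x i : ℕ) : x / 2 / 2 ^ i = x / 2 ^ (i + 1) := by
  rw [Nat.div_div_eq_div_mul, ← pow_succ']

lemma lessdot_split {a b s : ℕ} :
    Lessdot a b s ↔ a % 2 + b % 2 ≤ s % 2 ∧ Lessdot (a / 2) (b / 2) (s / 2) := by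
  simp only [lessdot_iff']
  constructor
  · intro h
    refine ⟨by simpa using h 0, fun i => ?_⟩
    have := h (i + 1)
    rwa [← div_div_pow a, ← div_div_pow b, ← div_div_pow s] at this
  · rintro ⟨h0, h⟩ i
    cases i with
    | zero => simpa using h0
    | succ i =>
      have := h i
      rwa [div_div_pow a, div_div_pow b, div_div_pow s] at this

lemma le_of_digits : ∀ a s : ℕ, (∀ i, a / 2 ^ i % 2 ≤ s / 2 ^ i % 2) → a ≤ s := by
  intro a
  induction a using Nat.strong_induction_on with
  | _ a ih =>
    intro s h
    rcases Nat.eq_zero_or_pos a with rfl | ha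
    · exact Nat.zero_le _
    · have h0 : a % 2 ≤ s % 2 := by simpa using h 0
      have hrec : a / 2 ≤ s / 2 := by
        refine ih (a / 2) (by omega) (s / 2) (fun i => ?_)
        have := h (i + 1)
        rwa [← div_div_pow a, ← div_div_pow s] at this
      omega

lemma lessdot_le {a b s : ℕ} (h : Lessdot a b s) : a ≤ s ∧ b ≤ s := by
  rw [lessdot_iff'] at h
  exact ⟨le_of_digits a s (fun i => by have := h i; omega),
    le_of_digits b s (fun i => by have := h i; omega)⟩

lemma lessdot_build {a b s u v c : ℕ} (h : Lessdot a b s) (hu : u ≤ 1) (hv : v ≤ 1)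
    (huv : u + v ≤ c) (hc : c ≤ 1) : Lessdot (2 * a + u) (2 * b + v) (2 * s + c) := by
  rw [lessdot_split]
  have e1 : (2 * a + u) / 2 = a := by omega
  have e2 : (2 * b + v) / 2 = b := by omega
  have e3 : (2 * s + c) / 2 = s := by omega
  rw [e1, e2, e3]
  exact ⟨by omega, h⟩

lemma lessdot_destruct {a b s c : ℕ} (hc : c ≤ 1) (h : Lessdot a b (2 * s + c)) :
    a % 2 + b % 2 ≤ c ∧ Lessdot (a / 2) (b / 2) s := by
  rw [lessdot_split] at h
  have e3 : (2 * s + c) / 2 = s := by omega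
  have e4 : (2 * s + c) % 2 = c := by omega
  rw [e3] at h
  rw [e4] at h
  exact h

lemma mem_BSet {s n : ℕ} : n ∈ BSet 1 s ↔ ∃ a b, Lessdot a b s ∧ n = 2 * a + b := by
  classical
  unfold BSet
  simp only [Finset.mem_image, Finset.mem_filter, Finset.mem_product, Finset.mem_range]
  constructor
  · rintro ⟨⟨a, b⟩, ⟨⟨_, _⟩, h⟩, rfl⟩
    exact ⟨a, b, h, by norm_num⟩
  · rintro ⟨a, b, h, rfl⟩
    exact ⟨(a, b), ⟨⟨Nat.lt_succ_of_le (lessdot_le h).1, Nat.lt_succ_of_le (lessdot_le h).2⟩, h⟩,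
      by norm_num⟩

lemma BSet_zero : BSet 1 0 = {0} := by
  ext n
  simp only [mem_BSet, Finset.mem_singleton]
  constructor
  · rintro ⟨a, b, h, rfl⟩
    have := lessdot_le h
    omega
  · rintro rfl
    exact ⟨0, 0, fun i => by simp, by omega⟩

lemma mem_BSet_even {s n : ℕ} : n ∈ BSet 1 (2 * s) ↔ ∃ w ∈ BSet 1 s, n = 2 * w := by
  simp only [mem_BSet]
  constructor
  · rintro ⟨a, b, h, rfl⟩
    have h' := lessdot_destruct (c := 0) (by omega) (by simpa using h)
    exact ⟨2 * (a / 2) + b / 2, ⟨a / 2, b / 2, h'.2, rfl⟩, by omega⟩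
  · rintro ⟨w, ⟨a, b, h, rfl⟩, rfl⟩
    have hb : Lessdot (2 * a + 0) (2 * b + 0) (2 * s + 0) :=
      lessdot_build h (by omega) (by omega) (by omega) (by omega)
    simp only [Nat.add_zero] at hb
    exact ⟨2 * a, 2 * b, hb, by ring⟩

lemma mem_BSet_odd {s n : ℕ} :
    n ∈ BSet 1 (2 * s + 1) ↔ ∃ w ∈ BSet 1 s, 2 * w ≤ n ∧ n ≤ 2 * w + 2 := by
  simp only [mem_BSet]
  constructor
  · rintro ⟨a, b, h, rfl⟩
    have h' := lessdot_destruct (c := 1) (by omega) h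
    exact ⟨2 * (a / 2) + b / 2, ⟨a / 2, b / 2, h'.2, rfl⟩, by omega, by omega⟩
  · rintro ⟨w, ⟨a, b, h, rfl⟩, h1, h2⟩
    have hn : n = 2 * (2 * a + b) ∨ n = 2 * (2 * a + b) + 1 ∨ n = 2 * (2 * a + b) + 2 := by
      omega
    have hb00 : Lessdot (2 * a + 0) (2 * b + 0) (2 * s + 1) :=
      lessdot_build h (by omega) (by omega) (by omega) (by omega)
    have hb01 : Lessdot (2 * a + 0) (2 * b + 1) (2 * s + 1) :=
      lessdot_build h (by omega) (by omega) (by omega) (by omega)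
    have hb10 : Lessdot (2 * a + 1) (2 * b + 0) (2 * s + 1) :=
      lessdot_build h (by omega) (by omega) (by omega) (by omega)
    simp only [Nat.add_zero] at hb00 hb01 hb10
    rcases hn with rfl | rfl | rfl
    · exact ⟨2 * a, 2 * b, hb00, by ring⟩
    · exact ⟨2 * a, 2 * b + 1, hb01, by ring⟩
    · exact ⟨2 * a + 1, 2 * b, hb10, by ring⟩

/-- the "thickening" `B ∪ (B+1)` -/
noncomputable def UpS (B : Finset ℕ) : Finset ℕ := B ∪ B.image (· + 1)

lemma mem_UpS {B : Finset ℕ} {x : ℕ} : x ∈ UpS B ↔ x ∈ B ∨ ∃ w ∈ B, x = w + 1 := by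
  unfold UpS
  simp [Finset.mem_union, Finset.mem_image, eq_comm]

lemma BSet_even (s : ℕ) : BSet 1 (2 * s) = (BSet 1 s).image (fun w => 2 * w) := by
  ext n
  rw [mem_BSet_even]
  simp [Finset.mem_image, eq_comm]

lemma BSet_odd (s : ℕ) :
    BSet 1 (2 * s + 1) =
      (UpS (BSet 1 s)).image (fun w => 2 * w) ∪ (BSet 1 s).image (fun w => 2 * w + 1) := by
  ext n
  rw [mem_BSet_odd]
  simp only [Finset.mem_union, Finset.mem_image, mem_UpS]
  constructor
  · rintro ⟨w, hw, h1, h2⟩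
    have : n = 2 * w ∨ n = 2 * w + 1 ∨ n = 2 * w + 2 := by omega
    rcases this with rfl | rfl | rfl
    · exact Or.inl ⟨w, Or.inl hw, rfl⟩
    · exact Or.inr ⟨w, hw, rfl⟩
    · exact Or.inl ⟨w + 1, Or.inr ⟨w, hw, rfl⟩, by ring⟩
  · rintro (⟨x, hx | ⟨w, hw, rfl⟩, rfl⟩ | ⟨w, hw, rfl⟩)
    · exact ⟨x, hx, by omega⟩
    · exact ⟨w, hw, by omega⟩
    · exact ⟨w, hw, by omega⟩

lemma UpS_even (s : ℕ) :
    UpS (BSet 1 (2 * s)) =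
      (BSet 1 s).image (fun w => 2 * w) ∪ (BSet 1 s).image (fun w => 2 * w + 1) := by
  ext n
  rw [mem_UpS]
  simp only [Finset.mem_union, Finset.mem_image, mem_BSet_even]
  constructor
  · rintro (⟨w, hw, rfl⟩ | ⟨x, ⟨w, hw, rfl⟩, rfl⟩)
    · exact Or.inl ⟨w, hw, rfl⟩
    · exact Or.inr ⟨w, hw, rfl⟩
  · rintro (⟨w, hw, rfl⟩ | ⟨w, hw, rfl⟩)
    · exact Or.inl ⟨w, hw, rfl⟩
    · exact Or.inr ⟨2 * w, ⟨w, hw, rfl⟩, by omega⟩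

lemma UpS_odd (s : ℕ) :
    UpS (BSet 1 (2 * s + 1)) =
      (UpS (BSet 1 s)).image (fun w => 2 * w) ∪ (UpS (BSet 1 s)).image (fun w => 2 * w + 1) := by
  ext n
  rw [mem_UpS]
  simp only [Finset.mem_union, Finset.mem_image, mem_BSet_odd, mem_UpS]
  constructor
  · rintro (⟨w, hw, h1, h2⟩ | ⟨x, ⟨w, hw, h1, h2⟩, rfl⟩)
    · have : n = 2 * w ∨ n = 2 * w + 1 ∨ n = 2 * w + 2 := by omega
      rcases this with rfl | rfl | rfl
      · exact Or.inl ⟨w, Or.inl hw, rfl⟩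
      · exact Or.inr ⟨w, Or.inl hw, rfl⟩
      · exact Or.inl ⟨w + 1, Or.inr ⟨w, hw, rfl⟩, by ring⟩
    · have : x = 2 * w ∨ x = 2 * w + 1 ∨ x = 2 * w + 2 := by omega
      rcases this with rfl | rfl | rfl
      · exact Or.inr ⟨w, Or.inl hw, rfl⟩
      · exact Or.inl ⟨w + 1, Or.inr ⟨w, hw, rfl⟩, by ring⟩
      · exact Or.inr ⟨w + 1, Or.inr ⟨w, hw, rfl⟩, by ring⟩
  · rintro (⟨x, hx | ⟨w, hw, rfl⟩, rfl⟩ | ⟨x, hx | ⟨w, hw, rfl⟩, rfl⟩)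
    · exact Or.inl ⟨x, hx, by omega, by omega⟩
    · exact Or.inl ⟨w, hw, by omega, by omega⟩
    · exact Or.inl ⟨x, hx, by omega, by omega⟩
    · exact Or.inr ⟨2 * w + 2, ⟨w, hw, by omega, by omega⟩, by ring⟩

lemma card_even_odd (C D : Finset ℕ) :
    ((C.image (fun w => 2 * w)) ∪ (D.image (fun w => 2 * w + 1))).card = C.card + D.card := by
  rw [Finset.card_union_of_disjoint, Finset.card_image_of_injective _ (fun x y h => by omega),
    Finset.card_image_of_injective _ (fun x y h => by omega)]
  rw [Finset.disjoint_left]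
  rintro x hx hy
  simp only [Finset.mem_image] at hx hy
  obtain ⟨c, _, rfl⟩ := hx
  obtain ⟨d, _, hd⟩ := hy
  omega

noncomputable def bb (s : ℕ) : ℕ := (BSet 1 s).card
noncomputable def uu (s : ℕ) : ℕ := (UpS (BSet 1 s)).card

lemma bb_even (s : ℕ) : bb (2 * s) = bb s := by
  unfold bb
  rw [BSet_even, Finset.card_image_of_injective _ (fun x y h => by omega)]

lemma bb_odd (s : ℕ) : bb (2 * s + 1) = uu s + bb s := by
  unfold bb uu
  rw [BSet_odd, card_even_odd]

lemma uu_even (s : ℕ) : uu (2 * s) = bb s + bb s := by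
  unfold uu bb
  rw [UpS_even, card_even_odd]

lemma uu_odd (s : ℕ) : uu (2 * s + 1) = uu s + uu s := by
  unfold uu
  rw [UpS_odd, card_even_odd]

lemma bb_zero : bb 0 = 1 := by
  unfold bb
  rw [BSet_zero]
  rfl

lemma uu_zero : uu 0 = 2 := by
  unfold uu UpS
  rw [BSet_zero]
  rfl

noncomputable def Vnum (m : ℕ) : ℕ := ∑ s ∈ Finset.range (2 ^ m), uu s

lemma sum_range_two_mul (f : ℕ → ℕ) (n : ℕ) :
    ∑ i ∈ Finset.range (2 * n), f i = ∑ i ∈ Finset.range n, (f (2 * i) + f (2 * i + 1)) := by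
  induction n with
  | zero => simp
  | succ n ih =>
    rw [Finset.sum_range_succ, ← ih, show 2 * (n + 1) = (2 * n + 1) + 1 by ring,
      Finset.sum_range_succ, Finset.sum_range_succ]
    omega

lemma Nnum_eq (m : ℕ) : Nnum 1 m = ∑ s ∈ Finset.range (2 ^ m), bb s := rfl

lemma Nnum_succ (m : ℕ) : Nnum 1 (m + 1) = 2 * Nnum 1 m + Vnum m := by
  rw [Nnum_eq, Nnum_eq, Vnum, pow_succ, mul_comm (2 ^ m) 2, sum_range_two_mul]
  have : ∀ i ∈ Finset.range (2 ^ m), bb (2 * i) + bb (2 * i + 1) = (bb i + bb i) + uu i := by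
    intro i _
    rw [bb_even, bb_odd]
    ring
  rw [Finset.sum_congr rfl this, Finset.sum_add_distrib, Finset.sum_add_distrib]
  omega

lemma Vnum_succ (m : ℕ) : Vnum (m + 1) = 2 * Nnum 1 m + 2 * Vnum m := by
  rw [Vnum, Vnum, Nnum_eq, pow_succ, mul_comm (2 ^ m) 2, sum_range_two_mul]
  have : ∀ i ∈ Finset.range (2 ^ m), uu (2 * i) + uu (2 * i + 1) = (bb i + bb i) + (uu i + uu i) := by
    intro i _
    rw [uu_even, uu_odd]
  rw [Finset.sum_congr rfl this, Finset.sum_add_distrib, Finset.sum_add_distrib,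
    Finset.sum_add_distrib]
  omega

lemma key (m : ℕ) :
    ((Nnum 1 m : ℝ) =
        (1 + Real.sqrt 2) / 2 * (2 + Real.sqrt 2) ^ m +
          (1 - Real.sqrt 2) / 2 * (2 - Real.sqrt 2) ^ m) ∧
      ((Vnum m : ℝ) =
        Real.sqrt 2 * ((1 + Real.sqrt 2) / 2) * (2 + Real.sqrt 2) ^ m -
          Real.sqrt 2 * ((1 - Real.sqrt 2) / 2) * (2 - Real.sqrt 2) ^ m) := by
  have hs : Real.sqrt 2 * Real.sqrt 2 = 2 := Real.mul_self_sqrt (by norm_num)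
  induction m with
  | zero =>
    constructor
    · have h1 : Nnum 1 0 = 1 := by
        rw [Nnum_eq]
        simp [bb_zero]
      rw [h1]
      push_cast
      ring
    · have h2 : Vnum 0 = 2 := by
        rw [Vnum]
        simp [uu_zero]
      rw [h2]
      push_cast
      linear_combination -hs
  | succ m ih =>
    obtain ⟨ihN, ihV⟩ := ih
    constructor
    · rw [Nnum_succ]
      push_cast
      rw [ihN, ihV, pow_succ, pow_succ]
      ring
    · rw [Vnum_succ]
      push_cast
      rw [ihN, ihV, pow_succ, pow_succ]
      linear_combination (-(1 + Real.sqrt 2) / 2 * (2 + Real.sqrt 2) ^ m -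
        (1 - Real.sqrt 2) / 2 * (2 - Real.sqrt 2) ^ m) * hs

end Stmt8Aux

/-- For every `m ≥ 0`,
`N_m = ((1+√2)/2)·(2+√2)^m + ((1−√2)/2)·(2−√2)^m` as real numbers. -/
theorem stmt_8 (m : ℕ) :
    (Nnum 1 m : ℝ) =
      (1 + Real.sqrt 2) / 2 * (2 + Real.sqrt 2) ^ m +
        (1 - Real.sqrt 2) / 2 * (2 - Real.sqrt 2) ^ m :=
  (Stmt8Aux.key m).1
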